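/- (First implication of Proposition 1.) Under the queue dynamics and the availability constraint, with Q^(l)(0) ≥ 0 for all l, suppose the long-run arrival averages exist: (1/T) ∑_{t=0}^{T−1} a^(≥l)(t) → λ^(≥l) as T → ∞. Then for every lifetime l ∈ {1,…,L}: limsup_{T→∞} (1/T) ∑_{t=0}^{T−1} ( xout^(≥l)(t) − xin^(≥l+1)(t) ) ≤ λ^(≥l). In particular, every availability-respecting policy satisfies the relaxed lifetime-driven causality constraint of the virtual network. -/

import Mathlib

open Finset Filter Topology

/-- first implication of Proposition 1: under the lifetime-driven
queue dynamics and the availability constraint, if the long-run arrival averages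
exist, then every availability-respecting policy satisfies the relaxed
lifetime-driven causality constraint of the virtual network:
`limsup_T (1/T) ∑_{t<T} (xout^(≥l)(t) − xin^(≥l+1)(t)) ≤ λ^(≥l)`. -/
theorem stmt2
    (L : ℕ) (hL : 1 ≤ L)
    (Q a xin xout : ℕ → ℕ → ℝ)
    (lam : ℕ → ℝ)
    (ha : ∀ t, ∀ l ∈ Icc 1 L, 0 ≤ a t l)
    (hxin : ∀ t, ∀ l ∈ Icc 1 L, 0 ≤ xin t l)
    (hxout : ∀ t, ∀ l ∈ Icc 1 L, 0 ≤ xout t l)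
    (hQtop : ∀ t, Q t (L + 1) = 0)
    (hxintop : ∀ t, xin t (L + 1) = 0)
    (hxouttop : ∀ t, xout t (L + 1) = 0)
    (hdyn : ∀ t, ∀ l ∈ Icc 1 L,
      Q (t + 1) l = Q t (l + 1) - xout t (l + 1) + xin t (l + 1) + a t l)
    (havail : ∀ t, ∀ l ∈ Icc 1 L, xout t l ≤ Q t l)
    (hinit : ∀ l ∈ Icc 1 L, 0 ≤ Q 0 l)
    (hconva : ∀ l ∈ Icc 1 L,
      Tendsto (fun T : ℕ => (∑ t ∈ range T, ∑ m ∈ Icc l L, a t m) / T) atTop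
        (𝓝 (∑ m ∈ Icc l L, lam m))) :
    ∀ l ∈ Icc 1 L,
      limsup
        (fun T : ℕ =>
          (∑ t ∈ range T,
            ((∑ m ∈ Icc l L, xout t m) - ∑ m ∈ Icc (l + 1) L, xin t m)) / T)
        atTop ≤ ∑ m ∈ Icc l L, lam m := by
  intro l hl
  obtain ⟨hl1, hlL⟩ := mem_Icc.mp hl
  -- nonnegativity of Q at all times
  have hQnn : ∀ t, ∀ m ∈ Icc 1 L, 0 ≤ Q t m := by
    intro t
    induction t with
    | zero => exact hinit
    | succ t ih =>
      intro m hm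
      obtain ⟨hm1, hmL⟩ := mem_Icc.mp hm
      rw [hdyn t m hm]
      rcases eq_or_lt_of_le hmL with h | h
      · subst h
        rw [hQtop, hxouttop, hxintop]
        have := ha t m (mem_Icc.mpr ⟨hm1, le_refl m⟩)
        linarith
      · have hm1L : m + 1 ∈ Icc 1 L := mem_Icc.mpr ⟨le_trans hm1 (Nat.le_succ m), h⟩
        have h1 := havail t (m + 1) hm1L
        have h2 := hxin t (m + 1) hm1L
        have h3 := ha t m hm
        linarith
  -- shift of summation index
  have hshift : ∀ (h : ℕ → ℝ),
      ∑ m ∈ Icc l L, h (m + 1) = ∑ m ∈ Icc (l + 1) L, h m + h (L + 1) := by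
    intro h
    rw [← Finset.sum_Icc_succ_top (by omega : l + 1 ≤ L + 1) h,
      ← Finset.map_add_right_Icc l L 1, Finset.sum_map]
    rfl
  -- split off the bottom term
  have hsplit : ∀ (h : ℕ → ℝ),
      ∑ m ∈ Icc l L, h m = h l + ∑ m ∈ Icc (l + 1) L, h m := by
    intro h
    rw [Finset.Icc_eq_cons_Ioc hlL, Finset.sum_cons, ← Finset.Icc_add_one_left_eq_Ioc]
  set S : ℕ → ℝ := fun t => ∑ m ∈ Icc l L, Q t m with hS
  have hSnn : ∀ t, 0 ≤ S t := by
    intro t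
    apply Finset.sum_nonneg
    intro m hm
    obtain ⟨hml, hmL⟩ := mem_Icc.mp hm
    exact hQnn t m (mem_Icc.mpr ⟨le_trans hl1 hml, hmL⟩)
  -- per-step inequality
  have hstep : ∀ t,
      (∑ m ∈ Icc l L, xout t m) - ∑ m ∈ Icc (l + 1) L, xin t m
        ≤ (∑ m ∈ Icc l L, a t m) + (S t - S (t + 1)) := by
    intro t
    have hS1 : S (t + 1) = ∑ m ∈ Icc l L,
        (Q t (m + 1) - xout t (m + 1) + xin t (m + 1) + a t m) := by
      apply Finset.sum_congr rfl
      intro m hm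
      obtain ⟨hml, hmL⟩ := mem_Icc.mp hm
      exact hdyn t m (mem_Icc.mpr ⟨le_trans hl1 hml, hmL⟩)
    have hS2 : S (t + 1) = ∑ m ∈ Icc (l + 1) L, Q t m
        - ∑ m ∈ Icc (l + 1) L, xout t m + ∑ m ∈ Icc (l + 1) L, xin t m
        + ∑ m ∈ Icc l L, a t m := by
      rw [hS1]
      simp only [Finset.sum_add_distrib, Finset.sum_sub_distrib]
      rw [hshift (fun m => Q t m), hshift (fun m => xout t m),
        hshift (fun m => xin t m), hQtop, hxouttop, hxintop]
      ring
    have hQsplit := hsplit (fun m => Q t m)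
    have hxoutsplit := hsplit (fun m => xout t m)
    have hav := havail t l hl
    rw [hxoutsplit]
    rw [hS] at hS2 ⊢
    simp only at hS2 ⊢
    rw [hQsplit] at *
    linarith [hS2]
  -- summed inequality
  have hsum : ∀ T : ℕ,
      (∑ t ∈ range T, ((∑ m ∈ Icc l L, xout t m) - ∑ m ∈ Icc (l + 1) L, xin t m))
        ≤ (∑ t ∈ range T, ∑ m ∈ Icc l L, a t m) + S 0 := by
    intro T
    calc (∑ t ∈ range T, ((∑ m ∈ Icc l L, xout t m) - ∑ m ∈ Icc (l + 1) L, xin t m))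
        ≤ ∑ t ∈ range T, ((∑ m ∈ Icc l L, a t m) + (S t - S (t + 1))) :=
          Finset.sum_le_sum fun t _ => hstep t
      _ = (∑ t ∈ range T, ∑ m ∈ Icc l L, a t m) + (S 0 - S T) := by
          rw [Finset.sum_add_distrib, Finset.sum_range_sub' S T]
      _ ≤ (∑ t ∈ range T, ∑ m ∈ Icc l L, a t m) + S 0 := by
          have := hSnn T; linarith
  set f : ℕ → ℝ := fun T =>
    (∑ t ∈ range T, ((∑ m ∈ Icc l L, xout t m) - ∑ m ∈ Icc (l + 1) L, xin t m)) / T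
  set g : ℕ → ℝ := fun T =>
    ((∑ t ∈ range T, ∑ m ∈ Icc l L, a t m) + S 0) / T with hg
  have hfg : ∀ T, f T ≤ g T := by
    intro T
    rcases Nat.eq_zero_or_pos T with h | h
    · subst h; simp [f, g]
    · have hT : (0 : ℝ) < T := by exact_mod_cast h
      exact div_le_div_of_nonneg_right (hsum T) hT.le
  -- g tends to λ
  have hgconv : Tendsto g atTop (𝓝 (∑ m ∈ Icc l L, lam m)) := by
    have h1 := hconva l hl
    have h2 := tendsto_const_div_atTop_nhds_zero_nat (S 0)
    have h3 := h1.add h2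
    rw [add_zero] at h3
    apply h3.congr
    intro T
    rw [hg]
    rw [← add_div]
  -- λ ≥ 0
  have hlamnn : 0 ≤ ∑ m ∈ Icc l L, lam m := by
    refine ge_of_tendsto' (hconva l hl) fun T => ?_
    apply div_nonneg _ (Nat.cast_nonneg T)
    apply Finset.sum_nonneg
    intro t _
    apply Finset.sum_nonneg
    intro m hm
    obtain ⟨hml, hmL⟩ := mem_Icc.mp hm
    exact ha t m (mem_Icc.mpr ⟨le_trans hl1 hml, hmL⟩)
  rw [limsup_eq]
  by_cases hb : BddBelow {a : ℝ | ∀ᶠ T in atTop, f T ≤ a}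
  · refine le_of_forall_pos_le_add fun ε hε => ?_
    refine csInf_le hb ?_
    have hev : ∀ᶠ T in atTop, g T < ∑ m ∈ Icc l L, lam m + ε :=
      hgconv.eventually (gt_mem_nhds (lt_add_of_pos_right _ hε))
    filter_upwards [hev] with T hT
    exact (hfg T).trans hT.le
  · rw [Real.sInf_of_not_bddBelow hb]
    exact hlamnn
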